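/- If a point Y′ lies in the convex hull of points A′₁,…,A′ₖ, where each A′_i lies on segment from P to A_i, then the segment PY′ is contained in the convex hull of {P, A₁, …, Aₖ}, and the ray from P through Y′ meets the convex hull of {A₁,…,Aₖ} provided the A_i all lie strictly on the far side of a hyperplane through the A′_i separating them from P. -/
import Mathlib


theorem segment_and_ray_in_cone (d k : ℕ)
    (P : Fin d → ℝ) (A A' : Fin k → (Fin d → ℝ))
    (hseg : ∀ i, A' i ∈ segment ℝ P (A i))
    (Y' : Fin d → ℝ) (hY' : Y' ∈ convexHull ℝ (Set.range A')) :
    segment ℝ P Y' ⊆ convexHull ℝ ({P} ∪ Set.range A) ∧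
    (∀ f : (Fin d → ℝ) →ᵃ[ℝ] ℝ, f P < 0 → (∀ i, f (A' i) = 0) → (∀ i, 0 < f (A i)) →
      ∃ t : ℝ, 0 ≤ t ∧ P + t • (Y' - P) ∈ convexHull ℝ (Set.range A)) := by
  have hPmem : P ∈ convexHull ℝ ({P} ∪ Set.range A) :=
    subset_convexHull ℝ _ (Or.inl rfl)
  have hsub : Set.range A' ⊆ convexHull ℝ ({P} ∪ Set.range A) := by
    rintro _ ⟨i, rfl⟩
    have hA : A i ∈ convexHull ℝ ({P} ∪ Set.range A) :=
      subset_convexHull ℝ _ (Or.inr ⟨i, rfl⟩)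
    exact (convex_convexHull ℝ _).segment_subset hPmem hA (hseg i)
  have hY'mem : Y' ∈ convexHull ℝ ({P} ∪ Set.range A) :=
    convexHull_min hsub (convex_convexHull ℝ _) hY'
  refine ⟨(convex_convexHull ℝ _).segment_subset hPmem hY'mem, ?_⟩
  intro f hfP hfA' hfA
  -- f Y' = 0
  have hfY' : f Y' = 0 := by
    have h0 : Set.range A' ⊆ f ⁻¹' {0} := by
      rintro _ ⟨i, rfl⟩; exact hfA' i
    have : Y' ∈ f ⁻¹' {0} :=
      convexHull_min h0 ((convex_singleton (0:ℝ)).affine_preimage f) hY'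
    exact this
  -- range A' nonempty, so k > 0, so range A nonempty
  have hne' : (Set.range A').Nonempty :=
    convexHull_nonempty_iff.mp ⟨Y', hY'⟩
  obtain ⟨_, j, rfl⟩ := hne'
  have hne : (Set.range A).Nonempty := ⟨A j, j, rfl⟩
  -- rewrite Y' membership via convexHull_insert
  have hins : Y' ∈ convexHull ℝ (insert P (Set.range A)) := by
    rwa [← Set.singleton_union]
  rw [convexHull_insert hne, mem_convexJoin] at hins
  obtain ⟨p, hp, z, hz, hYseg⟩ := hins
  rw [Set.mem_singleton_iff] at hp
  rw [hp] at hYseg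
  obtain ⟨a, b, ha, hb, hab, hcombo⟩ := hYseg
  -- f z > 0
  have hfz : 0 < f z := by
    have h1 : Set.range A ⊆ f ⁻¹' Set.Ioi 0 := by
      rintro _ ⟨i, rfl⟩; exact hfA i
    exact convexHull_min h1 ((convex_Ioi (0:ℝ)).affine_preimage f) hz
  have hfc : a * f P + b * f z = 0 := by
    have := Convex.combo_affine_apply (f := f) (x := P) (y := z) hab
    rw [hcombo] at this
    simpa [smul_eq_mul, hfY'] using this.symm
  have hbpos : 0 < b := by
    rcases lt_or_eq_of_le hb with h | h
    · exact h
    · exfalso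
      rw [← h, zero_mul, add_zero] at hfc
      have ha1 : a = 1 := by linarith
      rw [ha1, one_mul] at hfc
      linarith
  refine ⟨1 / b, by positivity, ?_⟩
  have ha' : a = 1 - b := by linarith
  have hYP : Y' - P = b • (z - P) := by
    rw [← hcombo, ha']
    module
  have : P + (1 / b) • (Y' - P) = z := by
    rw [hYP, smul_smul, one_div, inv_mul_cancel₀ hbpos.ne', one_smul]
    abel
  rw [this]
  exact hz
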